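/- arXiv:2403.01275 — 6 statements merged into one kernel-verified Lean document; each statement's English description precedes it below -/
import Mathlib

section
/- For any n×n alternating sign matrix (a_{i,j}), the matrix h defined by h_{i,j} = i + j − 2·Σ_{k≤i} Σ_{l≤j} a_{k,l} (for 0 ≤ i,j ≤ n) is a height function of degree n: it satisfies |h_{i+1,j} − h_{i,j}| = 1, |h_{i,j+1} − h_{i,j}| = 1, and the boundary conditions h_{i,0} = h_{0,i} = h_{n−i,n} = h_{n,n−i} = i for all 0 ≤ i ≤ n. -/
/-- Partial sum `s_{i,j} = Σ_{k≤i} Σ_{l≤j} a_{k,l}` (indices from 1). -/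
def asmSum (a : ℕ → ℕ → ℤ) (i j : ℕ) : ℤ :=
  ∑ k ∈ Finset.Icc 1 i, ∑ l ∈ Finset.Icc 1 j, a k l

/-- `a` is an `n × n` alternating sign matrix (entries indexed by `1..n`). -/
def IsASM (n : ℕ) (a : ℕ → ℕ → ℤ) : Prop :=
  (∀ i j, 1 ≤ i → i ≤ n → 1 ≤ j → j ≤ n → a i j = -1 ∨ a i j = 0 ∨ a i j = 1) ∧
  (∀ i, 1 ≤ i → i ≤ n → ∑ j ∈ Finset.Icc 1 n, a i j = 1) ∧
  (∀ j, 1 ≤ j → j ≤ n → ∑ i ∈ Finset.Icc 1 n, a i j = 1) ∧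
  (∀ i j, 1 ≤ i → i ≤ n → 1 ≤ j → j ≤ n →
    (∑ l ∈ Finset.Icc 1 j, a i l = 0 ∨ ∑ l ∈ Finset.Icc 1 j, a i l = 1)) ∧
  (∀ i j, 1 ≤ i → i ≤ n → 1 ≤ j → j ≤ n →
    (∑ k ∈ Finset.Icc 1 i, a k j = 0 ∨ ∑ k ∈ Finset.Icc 1 i, a k j = 1))

/-- `h` is a height function of degree `n` (an `(n+1) × (n+1)` matrix, indices `0..n`). -/
def IsHeight (n : ℕ) (h : ℕ → ℕ → ℤ) : Prop :=
  (∀ i j, i < n → j ≤ n → |h (i + 1) j - h i j| = 1) ∧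
  (∀ i j, i ≤ n → j < n → |h i (j + 1) - h i j| = 1) ∧
  (∀ i, i ≤ n → h i 0 = i ∧ h 0 i = i ∧ h (n - i) n = i ∧ h n (n - i) = i)

theorem asm_to_height (n : ℕ) (a : ℕ → ℕ → ℤ) (ha : IsASM n a) :
    IsHeight n (fun i j => (i : ℤ) + j - 2 * asmSum a i j) := by
  obtain ⟨h1, hrow, hcol, hprow, hpcol⟩ := ha
  have srow : ∀ i j, asmSum a (i + 1) j =
      asmSum a i j + ∑ l ∈ Finset.Icc 1 j, a (i + 1) l := by
    intro i j
    rw [asmSum, Finset.sum_Icc_succ_top (Nat.succ_le_succ (Nat.zero_le i))]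
    rfl
  have scol : ∀ i j, asmSum a i (j + 1) =
      asmSum a i j + ∑ k ∈ Finset.Icc 1 i, a k (j + 1) := by
    intro i j
    unfold asmSum
    rw [← Finset.sum_add_distrib]
    exact Finset.sum_congr rfl fun k _ => by
      rw [Finset.sum_Icc_succ_top (Nat.succ_le_succ (Nat.zero_le j))]
  have s0l : ∀ i, asmSum a i 0 = 0 := by intro i; simp [asmSum]
  have s0t : ∀ j, asmSum a 0 j = 0 := by intro j; simp [asmSum]
  have sright : ∀ i, i ≤ n → asmSum a i n = i := by
    intro i hi
    have : asmSum a i n = ∑ k ∈ Finset.Icc 1 i, (1 : ℤ) := by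
      refine Finset.sum_congr rfl fun k hk => ?_
      have hk' := Finset.mem_Icc.mp hk
      exact hrow k hk'.1 (hk'.2.trans hi)
    rw [this, Finset.sum_const, Nat.card_Icc]
    simp
  have sbot : ∀ j, j ≤ n → asmSum a n j = j := by
    intro j hj
    rw [asmSum, Finset.sum_comm]
    have : ∀ l ∈ Finset.Icc 1 j, ∑ k ∈ Finset.Icc 1 n, a k l = 1 := by
      intro l hl
      have hl' := Finset.mem_Icc.mp hl
      exact hcol l hl'.1 (hl'.2.trans hj)
    rw [Finset.sum_congr rfl this, Finset.sum_const, Nat.card_Icc]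
    simp
  refine ⟨?_, ?_, ?_⟩
  · intro i j hi hj
    simp only
    rw [srow]
    rcases Nat.eq_zero_or_pos j with hj0 | hj0
    · subst hj0; simp
    · rcases hprow (i + 1) j (Nat.succ_le_succ (Nat.zero_le i)) hi hj0 hj with h | h <;>
        rw [h] <;> push_cast <;> ring_nf <;> norm_num
  · intro i j hi hj
    simp only
    rw [scol]
    rcases Nat.eq_zero_or_pos i with hi0 | hi0
    · subst hi0; simp [s0t]
    · rcases hpcol i (j + 1) hi0 hi (Nat.le_add_left 1 j) hj with h | h <;>
        rw [h] <;> push_cast <;> ring_nf <;> norm_num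
  · intro i hi
    have hni : ((n - i : ℕ) : ℤ) = (n : ℤ) - i := by
      exact Nat.cast_sub hi
    refine ⟨?_, ?_, ?_, ?_⟩ <;> simp only
    · rw [s0l]; simp
    · rw [s0t]; simp
    · rw [sright _ (Nat.sub_le n i), hni]; ring
    · rw [sbot _ (Nat.sub_le n i), hni]; ring
end

section
/- For any height function h of degree n, the matrix a defined by a_{i,j} = −(1/2)(h_{i−1,j−1} − h_{i−1,j} + h_{i,j} − h_{i,j−1}) for 1 ≤ i,j ≤ n is an n×n alternating sign matrix. -/
/-- telescoping sum over `Icc 1 j`. -/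
lemma telescope (F : ℕ → ℤ) (j : ℕ) :
    ∑ l ∈ Finset.Icc 1 j, (F l - F (l - 1)) = F j - F 0 := by
  induction j with
  | zero => simp
  | succ m ih =>
      rw [Finset.sum_Icc_succ_top (by omega), ih]
      simp only [Nat.add_sub_cancel]
      ring

theorem height_to_asm (n : ℕ) (h : ℕ → ℕ → ℤ) (hh : IsHeight n h) :
    IsASM n (fun i j => -(h (i - 1) (j - 1) - h (i - 1) j + h i j - h i (j - 1)) / 2) := by
  obtain ⟨hV, hH, hB⟩ := hh
  set a : ℕ → ℕ → ℤ :=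
    fun i j => -(h (i - 1) (j - 1) - h (i - 1) j + h i j - h i (j - 1)) / 2 with ha
  have stepV : ∀ i j, 1 ≤ i → i ≤ n → j ≤ n →
      h (i-1) j - h i j = 1 ∨ h (i-1) j - h i j = -1 := by
    intro i j hi hin hj
    have := hV (i-1) j (by omega) hj
    rw [show i - 1 + 1 = i from by omega] at this
    rcases (abs_eq (by norm_num : (0:ℤ) ≤ 1)).mp this with h1 | h1 <;> omega
  have stepH : ∀ i j, i ≤ n → 1 ≤ j → j ≤ n →
      h i (j-1) - h i j = 1 ∨ h i (j-1) - h i j = -1 := by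
    intro i j hi hj hjn
    have := hH i (j-1) hi (by omega)
    rw [show j - 1 + 1 = j from by omega] at this
    rcases (abs_eq (by norm_num : (0:ℤ) ≤ 1)).mp this with h1 | h1 <;> omega
  have key : ∀ i j, 1 ≤ i → i ≤ n → 1 ≤ j → j ≤ n →
      2 * a i j = -(h (i - 1) (j - 1) - h (i - 1) j + h i j - h i (j - 1)) ∧
      (a i j = -1 ∨ a i j = 0 ∨ a i j = 1) := by
    intro i j hi hin hj hjn
    have h1 := stepH (i-1) j (by omega) hj hjn
    have h2 := stepH i j hin hj hjn
    have h3 : -(h (i - 1) (j - 1) - h (i - 1) j + h i j - h i (j - 1)) = -2 ∨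
           -(h (i - 1) (j - 1) - h (i - 1) j + h i j - h i (j - 1)) = 0 ∨
           -(h (i - 1) (j - 1) - h (i - 1) j + h i j - h i (j - 1)) = 2 := by omega
    simp only [ha]
    rcases h3 with h3 | h3 | h3 <;> rw [h3] <;> norm_num
  have rowS : ∀ i j, 1 ≤ i → i ≤ n → j ≤ n →
      2 * ∑ l ∈ Finset.Icc 1 j, a i l = h (i-1) j - h i j + 1 := by
    intro i j hi hin hjn
    rw [Finset.mul_sum]
    have hc : ∀ l ∈ Finset.Icc 1 j, 2 * a i l =
        ((fun m => h (i-1) m - h i m) l - (fun m => h (i-1) m - h i m) (l-1)) := by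
      intro l hl
      simp only [Finset.mem_Icc] at hl
      rw [(key i l hi hin hl.1 (le_trans hl.2 hjn)).1]
      ring
    rw [Finset.sum_congr rfl hc, telescope]
    have b1 := (hB (i-1) (by omega)).1
    have b2 := (hB i hin).1
    rw [b1, b2]
    push_cast
    have : (1:ℤ) ≤ (i:ℤ) := by exact_mod_cast hi
    push_cast [Nat.cast_sub hi] at b1 ⊢
    ring
  have colS : ∀ i j, 1 ≤ i → i ≤ n → 1 ≤ j → j ≤ n →
      2 * ∑ k ∈ Finset.Icc 1 i, a k j = h i (j-1) - h i j + 1 := by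
    intro i j hi hin hj hjn
    rw [Finset.mul_sum]
    have hc : ∀ k ∈ Finset.Icc 1 i, 2 * a k j =
        ((fun m => h m (j-1) - h m j) k - (fun m => h m (j-1) - h m j) (k-1)) := by
      intro k hk
      simp only [Finset.mem_Icc] at hk
      rw [(key k j hk.1 (le_trans hk.2 hin) hj hjn).1]
      ring
    rw [Finset.sum_congr rfl hc, telescope]
    have b1 := (hB (j-1) (by omega)).2.1
    have b2 := (hB j hjn).2.1
    rw [b1, b2]
    push_cast [Nat.cast_sub hj]
    ring
  refine ⟨fun i j hi hin hj hjn => (key i j hi hin hj hjn).2, ?_, ?_, ?_, ?_⟩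
  · intro i hi hin
    have := rowS i n hi hin le_rfl
    have b1 : h (i-1) n = (n : ℤ) - (i - 1) := by
      have := (hB (n - (i-1)) (by omega)).2.2.1
      rw [show n - (n - (i-1)) = i - 1 from by omega] at this
      rw [this]
      push_cast [Nat.cast_sub (by omega : i - 1 ≤ n), Nat.cast_sub hi]
      ring
    have b2 : h i n = (n : ℤ) - i := by
      have := (hB (n - i) (by omega)).2.2.1
      rw [show n - (n - i) = i from by omega] at this
      rw [this]
      push_cast [Nat.cast_sub hin]
      ring
    rw [b1, b2] at this
    have hi' : (1:ℤ) ≤ (i:ℤ) := by exact_mod_cast hi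
    push_cast [Nat.cast_sub hi] at this
    omega
  · intro j hj hjn
    have := colS n j (by omega) le_rfl hj hjn
    have b1 : h n (j-1) = (n : ℤ) - (j - 1) := by
      have := (hB (n - (j-1)) (by omega)).2.2.2
      rw [show n - (n - (j-1)) = j - 1 from by omega] at this
      rw [this]
      push_cast [Nat.cast_sub (by omega : j - 1 ≤ n), Nat.cast_sub hj]
      ring
    have b2 : h n j = (n : ℤ) - j := by
      have := (hB (n - j) (by omega)).2.2.2
      rw [show n - (n - j) = j from by omega] at this
      rw [this]
      push_cast [Nat.cast_sub hjn]
      ring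
    rw [b1, b2] at this
    have hj' : (1:ℤ) ≤ (j:ℤ) := by exact_mod_cast hj
    push_cast [Nat.cast_sub hj] at this
    omega
  · intro i j hi hin hj hjn
    have h1 := rowS i j hi hin hjn
    have h2 := stepV i j hi hin hjn
    omega
  · intro i j hi hin hj hjn
    have h1 := colS i j hi hin hj hjn
    have h2 := stepH i j hin hj hjn
    omega
end

section
/- The map sending an n×n alternating sign matrix (a_{i,j}) to the (n+1)×(n+1) matrix h with h_{i,j} = i + j − 2·Σ_{k≤i} Σ_{l≤j} a_{k,l} is a bijection from the set of n×n alternating sign matrices to the set of height functions of degree n, with inverse given by a_{i,j} = −(1/2)(h_{i−1,j−1} − h_{i−1,j} + h_{i,j} − h_{i,j−1}). -/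
/-- The map from ASMs to height functions. -/
def asmToHeight (a : ℕ → ℕ → ℤ) (i j : ℕ) : ℤ :=
  (i : ℤ) + j - 2 * asmSum a i j

/-- The map from height functions to ASMs. -/
def heightToAsm (h : ℕ → ℕ → ℤ) (i j : ℕ) : ℤ :=
  -(h (i - 1) (j - 1) - h (i - 1) j + h i j - h i (j - 1)) / 2

/- ### Auxiliary lemmas -/

lemma asmSum_zero_left (a : ℕ → ℕ → ℤ) (j : ℕ) : asmSum a 0 j = 0 := by
  simp [asmSum]

lemma asmSum_zero_right (a : ℕ → ℕ → ℤ) (i : ℕ) : asmSum a i 0 = 0 := by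
  simp [asmSum]

lemma asmSum_succ_left (a : ℕ → ℕ → ℤ) (i j : ℕ) :
    asmSum a (i+1) j = asmSum a i j + ∑ l ∈ Finset.Icc 1 j, a (i+1) l := by
  rw [asmSum, asmSum, Finset.sum_Icc_succ_top (by omega)]

lemma asmSum_succ_right (a : ℕ → ℕ → ℤ) (i j : ℕ) :
    asmSum a i (j+1) = asmSum a i j + ∑ k ∈ Finset.Icc 1 i, a k (j+1) := by
  rw [asmSum, asmSum, ← Finset.sum_add_distrib]
  exact Finset.sum_congr rfl fun k _ => Finset.sum_Icc_succ_top (by omega) _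

lemma heightToAsm_transpose (h : ℕ → ℕ → ℤ) (i j : ℕ) :
    heightToAsm (fun x y => h y x) i j = heightToAsm h j i := by
  unfold heightToAsm
  congr 1
  ring

lemma IsHeight.transpose {n : ℕ} {h : ℕ → ℕ → ℤ} (hh : IsHeight n h) :
    IsHeight n (fun x y => h y x) := by
  obtain ⟨h1, h2, h3⟩ := hh
  refine ⟨fun i j hi hj => h2 j i hj hi, fun i j hi hj => h1 j i hj hi, fun i hi => ?_⟩
  obtain ⟨b1, b2, b3, b4⟩ := h3 i hi
  exact ⟨b2, b1, b4, b3⟩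

lemma height_bd {n : ℕ} {h : ℕ → ℕ → ℤ} (hh : IsHeight n h) (i : ℕ) (hi : i ≤ n) :
    h i 0 = i ∧ h 0 i = i ∧ h i n = (n : ℤ) - i ∧ h n i = (n : ℤ) - i := by
  obtain ⟨b1, b2, -, -⟩ := hh.2.2 i hi
  obtain ⟨-, -, b3, b4⟩ := hh.2.2 (n - i) (by omega)
  have e : n - (n - i) = i := by omega
  rw [e] at b3 b4
  refine ⟨b1, b2, ?_, ?_⟩ <;> omega

/-- Key: the vertical-difference formula and entry range for `heightToAsm`. -/
lemma key2 {n : ℕ} {h : ℕ → ℕ → ℤ} (hh : IsHeight n h) (i j : ℕ)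
    (hi : i < n) (hj : j < n) :
    heightToAsm h (i+1) (j+1) * 2
        = (h (i+1) j - h i j) - (h (i+1) (j+1) - h i (j+1)) ∧
      (heightToAsm h (i+1) (j+1) = -1 ∨ heightToAsm h (i+1) (j+1) = 0 ∨
        heightToAsm h (i+1) (j+1) = 1) := by
  have d1 : |h (i+1) j - h i j| = 1 := hh.1 i j hi (by omega)
  have d2 : |h (i+1) (j+1) - h i (j+1)| = 1 := hh.1 i (j+1) hi (by omega)
  rw [abs_eq (by norm_num)] at d1 d2
  unfold heightToAsm
  simp only [Nat.add_sub_cancel]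
  omega

/-- Row partial sums of `heightToAsm h`. -/
lemma rowsum2 {n : ℕ} {h : ℕ → ℕ → ℤ} (hh : IsHeight n h) (i : ℕ) (hi : i < n) :
    ∀ j ≤ n, 2 * ∑ l ∈ Finset.Icc 1 j, heightToAsm h (i+1) l
      = 1 - (h (i+1) j - h i j) := by
  intro j
  induction j with
  | zero =>
    intro _
    have b1 := (height_bd hh (i+1) (by omega)).1
    have b2 := (height_bd hh i (by omega)).1
    simp only [show Finset.Icc 1 0 = (∅ : Finset ℕ) by simp, Finset.sum_empty, mul_zero]
    omega
  | succ j ih =>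
    intro hj
    rw [Finset.sum_Icc_succ_top (by omega)]
    have hk := (key2 hh i j hi (by omega)).1
    have ihj := ih (by omega)
    omega

/-- Telescoped double sum for `heightToAsm h`. -/
lemma inv2 {n : ℕ} {h : ℕ → ℕ → ℤ} (hh : IsHeight n h) (j : ℕ) (hj : j ≤ n) :
    ∀ i ≤ n, 2 * asmSum (heightToAsm h) i j = (i : ℤ) + j - h i j := by
  intro i
  induction i with
  | zero =>
    intro _
    have := (height_bd hh j hj).2.1
    rw [asmSum_zero_left]
    omega
  | succ i ih =>
    intro hi
    rw [asmSum_succ_left]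
    have h1 := rowsum2 hh i (by omega) j hj
    have h2 := ih (by omega)
    push_cast
    omega

lemma asmSum_full_row {n : ℕ} {a : ℕ → ℕ → ℤ} (ha : IsASM n a) :
    ∀ m ≤ n, asmSum a m n = m := by
  intro m
  induction m with
  | zero => intro _; rw [asmSum_zero_left]; simp
  | succ m ih =>
    intro hm
    rw [asmSum_succ_left, ha.2.1 (m+1) (by omega) hm, ih (by omega)]
    push_cast
    ring

lemma asmSum_full_col {n : ℕ} {a : ℕ → ℕ → ℤ} (ha : IsASM n a) :
    ∀ m ≤ n, asmSum a n m = m := by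
  intro m hm
  rw [asmSum, Finset.sum_comm]
  rw [Finset.sum_congr rfl fun l hl => ha.2.2.1 l (Finset.mem_Icc.mp hl).1
    (le_trans (Finset.mem_Icc.mp hl).2 hm)]
  simp

lemma rowpartial1 {n : ℕ} {a : ℕ → ℕ → ℤ} (ha : IsASM n a) (i j : ℕ)
    (hi1 : 1 ≤ i) (hi : i ≤ n) (hj : j ≤ n) :
    ∑ l ∈ Finset.Icc 1 j, a i l = 0 ∨ ∑ l ∈ Finset.Icc 1 j, a i l = 1 := by
  rcases Nat.eq_zero_or_pos j with rfl | hj1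
  · left; simp
  · exact ha.2.2.2.1 i j hi1 hi hj1 hj

lemma colpartial1 {n : ℕ} {a : ℕ → ℕ → ℤ} (ha : IsASM n a) (i j : ℕ)
    (hi : i ≤ n) (hj1 : 1 ≤ j) (hj : j ≤ n) :
    ∑ k ∈ Finset.Icc 1 i, a k j = 0 ∨ ∑ k ∈ Finset.Icc 1 i, a k j = 1 := by
  rcases Nat.eq_zero_or_pos i with rfl | hi1
  · left; simp
  · exact ha.2.2.2.2 i j hi1 hi hj1 hj

theorem asm_height_bijection (n : ℕ) :
    (∀ a : ℕ → ℕ → ℤ, IsASM n a →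
      IsHeight n (asmToHeight a) ∧
        (∀ i j, 1 ≤ i → i ≤ n → 1 ≤ j → j ≤ n → heightToAsm (asmToHeight a) i j = a i j)) ∧
    (∀ h : ℕ → ℕ → ℤ, IsHeight n h →
      IsASM n (heightToAsm h) ∧
        (∀ i j, i ≤ n → j ≤ n → asmToHeight (heightToAsm h) i j = h i j)) := by
  constructor
  · -- ASM → height function
    intro a ha
    constructor
    · refine ⟨?_, ?_, ?_⟩
      · -- vertical differences
        intro i j hi hj
        have e := asmSum_succ_left a i j
        have sp := rowpartial1 ha (i+1) j (by omega) (by omega) hj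
        unfold asmToHeight
        rw [abs_eq (by norm_num)]
        push_cast
        omega
      · -- horizontal differences
        intro i j hi hj
        have e := asmSum_succ_right a i j
        have sp := colpartial1 ha i (j+1) hi (by omega) (by omega)
        unfold asmToHeight
        rw [abs_eq (by norm_num)]
        push_cast
        omega
      · -- boundary
        intro i hi
        have f1 := asmSum_full_row ha (n - i) (by omega)
        have f2 := asmSum_full_col ha (n - i) (by omega)
        have z1 := asmSum_zero_right a i
        have z2 := asmSum_zero_left a i
        unfold asmToHeight
        refine ⟨by omega, by omega, ?_, ?_⟩ <;> omega
    · -- inverse formula on ASM side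
      intro i j hi1 hi hj1 hj
      obtain ⟨i, rfl⟩ : ∃ i', i = i' + 1 := ⟨i - 1, by omega⟩
      obtain ⟨j, rfl⟩ : ∃ j', j = j' + 1 := ⟨j - 1, by omega⟩
      have e1 := asmSum_succ_left a i (j+1)
      have e2 := asmSum_succ_left a i j
      have e3 : ∑ l ∈ Finset.Icc 1 (j+1), a (i+1) l
          = (∑ l ∈ Finset.Icc 1 j, a (i+1) l) + a (i+1) (j+1) :=
        Finset.sum_Icc_succ_top (by omega) _
      unfold heightToAsm asmToHeight
      simp only [Nat.add_sub_cancel]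
      push_cast
      omega
  · -- height function → ASM
    intro h hh
    have hT := hh.transpose
    have colsum2 : ∀ j, j < n → ∀ i ≤ n,
        2 * ∑ k ∈ Finset.Icc 1 i, heightToAsm h k (j+1)
          = 1 - (h i (j+1) - h i j) := by
      intro j hj i hi
      have := rowsum2 hT j hj i hi
      simp only [heightToAsm_transpose] at this
      exact this
    constructor
    · refine ⟨?_, ?_, ?_, ?_, ?_⟩
      · -- entries in {-1,0,1}
        intro i j hi1 hi hj1 hj
        obtain ⟨i, rfl⟩ : ∃ i', i = i' + 1 := ⟨i - 1, by omega⟩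
        obtain ⟨j, rfl⟩ : ∃ j', j = j' + 1 := ⟨j - 1, by omega⟩
        exact (key2 hh i j (by omega) (by omega)).2
      · -- row sums
        intro i hi1 hi
        obtain ⟨i, rfl⟩ : ∃ i', i = i' + 1 := ⟨i - 1, by omega⟩
        have := rowsum2 hh i (by omega) n le_rfl
        have b1 := (height_bd hh (i+1) (by omega)).2.2.1
        have b2 := (height_bd hh i (by omega)).2.2.1
        omega
      · -- column sums
        intro j hj1 hj
        obtain ⟨j, rfl⟩ : ∃ j', j = j' + 1 := ⟨j - 1, by omega⟩
        have := colsum2 j (by omega) n le_rfl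
        have b1 := (height_bd hh (j+1) (by omega)).2.2.2
        have b2 := (height_bd hh j (by omega)).2.2.2
        omega
      · -- row partial sums
        intro i j hi1 hi hj1 hj
        obtain ⟨i, rfl⟩ : ∃ i', i = i' + 1 := ⟨i - 1, by omega⟩
        have := rowsum2 hh i (by omega) j hj
        have d : |h (i+1) j - h i j| = 1 := hh.1 i j (by omega) hj
        rw [abs_eq (by norm_num)] at d
        omega
      · -- column partial sums
        intro i j hi1 hi hj1 hj
        obtain ⟨j, rfl⟩ : ∃ j', j = j' + 1 := ⟨j - 1, by omega⟩
        have := colsum2 j (by omega) i hi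
        have d : |h i (j+1) - h i j| = 1 := hh.2.1 i j hi (by omega)
        rw [abs_eq (by norm_num)] at d
        omega
    · -- inverse formula on height side
      intro i j hi hj
      have := inv2 hh j hj i hi
      unfold asmToHeight
      omega
end

section
/- For the set P_n = {(i,j,k) ∈ ℤ³ : 1 ≤ i,j ≤ n−1, 1 ≤ k ≤ min(i,j,n−i,n−j)} with rank function rk(i,j,k) = |i−j| + 2k − 2, the number of elements of rank r (for 0 ≤ r ≤ n−2) is (n−r−1)(r+1); equivalently, the rank generating function is Σ_{r=0}^{n−2} (n−r−1)(r+1) q^r. -/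
/-- Membership in the poset `P_n`. -/
def memP (n : ℕ) (p : ℕ × ℕ × ℕ) : Prop :=
  1 ≤ p.1 ∧ p.1 ≤ n - 1 ∧ 1 ≤ p.2.1 ∧ p.2.1 ≤ n - 1 ∧
    1 ≤ p.2.2 ∧ p.2.2 ≤ min (min p.1 p.2.1) (min (n - p.1) (n - p.2.1))

instance (n : ℕ) (p : ℕ × ℕ × ℕ) : Decidable (memP n p) := by
  unfold memP; infer_instance

/-- The rank function `rk(i,j,k) = |i - j| + 2k - 2` (valued in `ℤ`). -/
def rkP (p : ℕ × ℕ × ℕ) : ℤ :=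
  |(p.1 : ℤ) - p.2.1| + 2 * p.2.2 - 2

/-- `p` covers `q` in `P_n`. -/
def CoversP (n : ℕ) (p q : ℕ × ℕ × ℕ) : Prop :=
  memP n p ∧ memP n q ∧
    |(p.1 : ℤ) - p.2.1| + 2 * p.2.2 = |(q.1 : ℤ) - q.2.1| + 2 * q.2.2 + 1 ∧
    |(p.1 : ℤ) - q.1| + |(p.2.1 : ℤ) - q.2.1| = 1

theorem P_rank_count (n r : ℕ) (hn : 2 ≤ n) (hr : r ≤ n - 2) :
    ((Finset.Icc 1 (n - 1) ×ˢ Finset.Icc 1 (n - 1) ×ˢ Finset.Icc 1 n).filter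
        (fun p => memP n p ∧ rkP p = r)).card = (n - r - 1) * (r + 1) := by
  have key : ((Finset.Icc 1 (n - 1) ×ˢ Finset.Icc 1 (n - 1) ×ˢ Finset.Icc 1 n).filter
        (fun p => memP n p ∧ rkP p = r)).card
      = (Finset.Icc 1 (n - 1 - r) ×ˢ Finset.range (r + 1)).card := by
    apply Finset.card_nbij' (i := fun p => (min p.1 p.2.1 + 1 - p.2.2,
        p.1 - (min p.1 p.2.1 + 1 - p.2.2)))
      (j := fun q => (q.1 + q.2, q.1 + r - q.2, min q.2 (r - q.2) + 1))
    · intro p hp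
      simp only [Finset.mem_filter, Finset.mem_product, Finset.mem_Icc, memP, rkP,
        Int.abs_eq_natAbs, Finset.mem_range, Finset.mem_coe] at hp ⊢
      omega
    · intro q hq
      simp only [Finset.mem_filter, Finset.mem_product, Finset.mem_Icc, memP, rkP,
        Int.abs_eq_natAbs, Finset.mem_range, Finset.mem_coe] at hq ⊢
      omega
    · intro p hp
      simp only [Finset.mem_filter, Finset.mem_product, Finset.mem_Icc, memP, rkP,
        Int.abs_eq_natAbs, Finset.mem_coe] at hp
      simp only [Prod.ext_iff]
      omega
    · intro q hq
      simp only [Finset.mem_product, Finset.mem_Icc, Finset.mem_range, Finset.mem_coe] at hq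
      simp only [Prod.ext_iff]
      omega
  rw [key, Finset.card_product, Nat.card_Icc, Finset.card_range]
  congr 1
  omega
end

section
/- The cardinality of P_n = {(i,j,k) ∈ ℤ³ : 1 ≤ i,j ≤ n−1, 1 ≤ k ≤ min(i,j,n−i,n−j)} equals Σ_{r=0}^{n−2} (n−r−1)(r+1) = binomial(n+1, 3). -/
open Finset

lemma shiftSum (f : ℕ → ℕ) (n : ℕ) : ∑ k ∈ Icc 1 n, f k = ∑ k ∈ range n, f (k+1) := by
  induction n with
  | zero => simp
  | succ n ih => rw [Finset.sum_Icc_succ_top (by omega), ih, Finset.sum_range_succ]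

lemma sumId (m : ℕ) : ∑ r ∈ range m, (r + 1) = Nat.choose (m+1) 2 := by
  induction m with
  | zero => simp
  | succ m ih =>
    rw [Finset.sum_range_succ, ih, show m+1+1 = m+2 from rfl,
      Nat.choose_succ_succ' (m+1) 1, Nat.choose_one_right]
    norm_num
    omega

lemma sumA (m : ℕ) : ∑ r ∈ range m, (m - r) * (r + 1) = Nat.choose (m+2) 3 := by
  induction m with
  | zero => simp
  | succ m ih =>
    rw [Finset.sum_range_succ]
    have h1 : ∑ r ∈ range m, (m + 1 - r) * (r + 1)
        = ∑ r ∈ range m, ((m - r) * (r + 1) + (r + 1)) := by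
      apply Finset.sum_congr rfl
      intro r hr
      simp only [Finset.mem_range] at hr
      have : m + 1 - r = (m - r) + 1 := by omega
      rw [this]; ring
    rw [h1, Finset.sum_add_distrib, ih, sumId, show m+1+2 = m+3 from rfl,
      show (m+3) = (m+2)+1 from rfl, Nat.choose_succ_succ' (m+2) 2]
    have : m + 1 - m = 1 := by omega
    rw [this]
    have hc : Nat.choose (m+2) 2 = Nat.choose (m+1) 2 + (m+1) := by
      rw [Nat.choose_succ_succ' (m+1) 1, Nat.choose_one_right]
      norm_num
      omega
    norm_num
    omega

lemma two_mul_choose_two (n : ℕ) : 2 * Nat.choose (n+1) 2 = n * (n+1) := by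
  induction n with
  | zero => decide
  | succ n ih =>
    have hc : Nat.choose (n+2) 2 = Nat.choose (n+1) 2 + (n+1) := by
      rw [Nat.choose_succ_succ' (n+1) 1, Nat.choose_one_right]
      norm_num
      omega
    rw [hc, Nat.mul_add, ih]
    ring

lemma sq_choose (m : ℕ) : Nat.choose (m+2) 2 + Nat.choose (m+1) 2 = (m+1)^2 := by
  nlinarith [two_mul_choose_two (m+1), two_mul_choose_two m]

lemma Qeq (n : ℕ) : ∑ k ∈ range n, ((n - (k+1)) + 1 - (k+1))^2 = Nat.choose (n+1) 3 := by
  induction n using Nat.strong_induction_on with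
  | _ n ih =>
    match n with
    | 0 => simp [Nat.choose]
    | 1 => decide
    | (m+2) =>
      have hm := ih m (by omega)
      rw [Finset.sum_range_succ', Finset.sum_range_succ]
      have h1 : ∀ k ∈ range m, ((m + 2 - (k+1+1)) + 1 - (k+1+1))^2
          = ((m - (k+1)) + 1 - (k+1))^2 := by
        intro k _
        congr 1
        omega
      rw [Finset.sum_congr rfl h1, hm]
      have h2 : ((m + 2 - (m+1+1)) + 1 - (m+1+1))^2 = 0 := by
        have e : m + 2 - (m+1+1) + 1 - (m+1+1) = 0 := by omega
        rw [e]; ring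
      have h3 : ((m + 2 - (0+1)) + 1 - (0+1))^2 = (m+1)^2 := by
        have e : m + 2 - (0+1) + 1 - (0+1) = m+1 := by omega
        rw [e]
      rw [h2, h3]
      have h4 : Nat.choose (m+2+1) 3 = Nat.choose (m+1) 3 + (m+1)^2 := by
        rw [Nat.choose_succ_succ' (m+2) 2, Nat.choose_succ_succ' (m+1) 2,
          ← sq_choose m]
        norm_num
        omega
      omega

lemma card_P_eq (n : ℕ) :
    ((Finset.Icc 1 (n - 1) ×ˢ Finset.Icc 1 (n - 1) ×ˢ Finset.Icc 1 n).filter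
        (fun p => memP n p)).card = Nat.choose (n + 1) 3 := by
  have key : ((Finset.Icc 1 (n - 1) ×ˢ Finset.Icc 1 (n - 1) ×ˢ Finset.Icc 1 n).filter
        (fun p => memP n p)).card
      = ∑ k ∈ Icc 1 n, (((n - k) + 1 - k))^2 := by
    rw [Finset.card_filter, Finset.sum_product]
    simp_rw [Finset.sum_product]
    rw [show (∑ i ∈ Icc 1 (n-1), ∑ j ∈ Icc 1 (n-1), ∑ k ∈ Icc 1 n,
          (if memP n (i, j, k) then (1:ℕ) else 0))
        = ∑ i ∈ Icc 1 (n-1), ∑ k ∈ Icc 1 n, ∑ j ∈ Icc 1 (n-1),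
          (if memP n (i, j, k) then (1:ℕ) else 0) from
      Finset.sum_congr rfl fun i _ => Finset.sum_comm, Finset.sum_comm]
    apply Finset.sum_congr rfl
    intro k hk
    simp only [Finset.mem_Icc] at hk
    have hfac : ∀ i ∈ Icc 1 (n-1), ∀ j ∈ Icc 1 (n-1),
        (if memP n (i, j, k) then (1:ℕ) else 0)
          = (if k ≤ i ∧ i ≤ n - k then (1:ℕ) else 0) *
            (if k ≤ j ∧ j ≤ n - k then 1 else 0) := by
      intro i hi j hj
      simp only [Finset.mem_Icc] at hi hj
      simp only [memP, le_min_iff]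
      split_ifs <;> omega
    rw [Finset.sum_congr rfl fun i hi => Finset.sum_congr rfl fun j hj => hfac i hi j hj,
      ← Finset.sum_mul_sum]
    have hcnt : (∑ i ∈ Icc 1 (n-1), if k ≤ i ∧ i ≤ n - k then (1:ℕ) else 0)
        = (n - k) + 1 - k := by
      rw [← Finset.card_filter]
      have : (Icc 1 (n-1)).filter (fun i => k ≤ i ∧ i ≤ n - k) = Icc k (n - k) := by
        ext a
        simp only [Finset.mem_filter, Finset.mem_Icc]
        omega
      rw [this, Nat.card_Icc]
    rw [hcnt]
    ring
  rw [key, shiftSum (fun k => ((n - k) + 1 - k)^2) n, Qeq]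

theorem P_card (n : ℕ) :
    ((Finset.Icc 1 (n - 1) ×ˢ Finset.Icc 1 (n - 1) ×ˢ Finset.Icc 1 n).filter
        (fun p => memP n p)).card
      = ∑ r ∈ Finset.range (n - 1), (n - r - 1) * (r + 1) ∧
    ((Finset.Icc 1 (n - 1) ×ˢ Finset.Icc 1 (n - 1) ×ˢ Finset.Icc 1 n).filter
        (fun p => memP n p)).card = Nat.choose (n + 1) 3 := by
  have hsum : ∑ r ∈ Finset.range (n - 1), (n - r - 1) * (r + 1) = Nat.choose (n + 1) 3 := by
    match n with
    | 0 => simp [Nat.choose]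
    | (m+1) =>
      have h1 : ∀ r ∈ range m, (m + 1 - r - 1) * (r + 1) = (m - r) * (r + 1) := by
        intro r _
        congr 1
        omega
      rw [show m + 1 - 1 = m from rfl, Finset.sum_congr rfl h1, sumA]
  exact ⟨by rw [card_P_eq, hsum], card_P_eq n⟩
end

section
/- For any height function h of degree n, the set ι(h) = {(i,j,k) ∈ P_n : h_{i,j} ≥ |i−j| + 2k} is a down-closed set (order ideal) of the poset P_n, where the order on P_n is generated by the cover relation: (i,j,k) covers (i′,j′,k′) iff |i−j| + 2k = |i′−j′| + 2k′ + 1 and |i−i′| + |j−j′| = 1. -/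
/-- The order ideal associated to a height function. -/
def iotaH (n : ℕ) (h : ℕ → ℕ → ℤ) : Set (ℕ × ℕ × ℕ) :=
  {p | memP n p ∧ |(p.1 : ℤ) - p.2.1| + 2 * p.2.2 ≤ h p.1 p.2.1}

lemma iota_step (n : ℕ) (h : ℕ → ℕ → ℤ) (hh : IsHeight n h)
    (p q : ℕ × ℕ × ℕ) (hp : p ∈ iotaH n h) (hc : CoversP n p q) :
    q ∈ iotaH n h := by
  obtain ⟨i, j, k⟩ := p
  obtain ⟨i', j', k'⟩ := q
  obtain ⟨mp, hle⟩ := hp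
  obtain ⟨_, mq, hrk, hadj⟩ := hc
  refine ⟨mq, ?_⟩
  simp only [memP] at mp mq
  simp only at hle hrk hadj ⊢
  have hn : 2 ≤ n := by omega
  have h4 : (i' = i + 1 ∧ j' = j) ∨ (i = i' + 1 ∧ j' = j) ∨
      (i' = i ∧ j' = j + 1) ∨ (i' = i ∧ j = j' + 1) := by
    rcases abs_cases ((i : ℤ) - i') with ⟨e1, _⟩ | ⟨e1, _⟩ <;>
      rcases abs_cases ((j : ℤ) - j') with ⟨e2, _⟩ | ⟨e2, _⟩ <;>
      rw [e1, e2] at hadj <;> omega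
  have habs : |h i' j' - h i j| = 1 := by
    rcases h4 with ⟨e1, e2⟩ | ⟨e1, e2⟩ | ⟨e1, e2⟩ | ⟨e1, e2⟩
    · rw [e1, e2]; exact hh.1 i j (by omega) (by omega)
    · rw [e1, e2, abs_sub_comm]; exact hh.1 i' j (by omega) (by omega)
    · rw [e1, e2]; exact hh.2.1 i j (by omega) (by omega)
    · rw [e1, e2, abs_sub_comm]; exact hh.2.1 i j' (by omega) (by omega)
  have h1 : -1 ≤ h i' j' - h i j := by
    have := neg_abs_le (h i' j' - h i j)
    rw [habs] at this; linarith
  linarith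

theorem iota_order_ideal (n : ℕ) (h : ℕ → ℕ → ℤ) (hh : IsHeight n h)
    (p q : ℕ × ℕ × ℕ) (hp : p ∈ iotaH n h)
    (hpq : Relation.ReflTransGen (CoversP n) p q) :
    q ∈ iotaH n h := by
  induction hpq with
  | refl => exact hp
  | tail _ hcov ih => exact iota_step n h hh _ _ ih hcov
end
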